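/- arXiv:2509.02843 — 2 statements merged into one kernel-verified Lean document; each statement's English description precedes it below -/
import Mathlib

section
/- For every real number α such that α − 4k ∈ (1,3) for some integer k, the matrix b₂(α) is special unitary: b₂(α)† · b₂(α) = I₂ and det b₂(α) = 1, i.e. b₂(α) ∈ SU(2). -/
open Complex Matrix

/-- The normalized braid generator `b₂(α)` of the non-semisimple Ising anyon model on the
single-qubit space (one neglecton of parameter `α` and two Ising anyons). -/
noncomputable def b2 (α : ℝ) : Matrix (Fin 2) (Fin 2) ℂ :=
  Complex.exp (-(Complex.I * (Real.pi / 4))) •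
    !![(1 + Complex.I) / (1 - Complex.exp (Complex.I * (Real.pi * α / 2))),
       Complex.exp (-(Complex.I * (Real.pi / 4))) *
         ((((1 - Real.cot (Real.pi * α / 4) ^ 2) / 2 : ℝ) : ℂ) ^ ((1 : ℂ) / 2));
       Complex.exp (-(Complex.I * (Real.pi / 4))) *
         ((((1 - Real.cot (Real.pi * α / 4) ^ 2) / 2 : ℝ) : ℂ) ^ ((1 : ℂ) / 2)),
       (1 + Complex.I) / (1 - Complex.exp (-(Complex.I * (Real.pi * α / 2))))]

/-- For `α` congruent to a value in `(1,3)` modulo 4, the braid generator `b₂(α)` is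
special unitary. -/
theorem b2_mem_specialUnitaryGroup (α : ℝ)
    (h : ∃ k : ℤ, 1 < α - 4 * k ∧ α - 4 * k < 3) :
    (b2 α)ᴴ * b2 α = 1 ∧ (b2 α).det = 1 ∧
      b2 α ∈ Matrix.specialUnitaryGroup (Fin 2) ℂ := by
  obtain ⟨k, hk1, hk3⟩ := h
  have hπ := Real.pi_pos
  set t : ℝ := Real.pi * α / 4 with ht
  have h1 : Real.pi / 4 < t - k * Real.pi := by
    have := mul_pos hπ (show (0:ℝ) < α - 4*k - 1 by linarith)
    rw [ht]; nlinarith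
  have h3 : t - k * Real.pi < 3 * Real.pi / 4 := by
    have := mul_pos hπ (show (0:ℝ) < 3 - (α - 4*k) by linarith)
    rw [ht]; nlinarith
  -- sin t ≠ 0
  have hS : Real.sin t ≠ 0 := by
    intro h0
    obtain ⟨n, hn⟩ := Real.sin_eq_zero_iff.1 h0
    have e1 : ((n:ℝ) - k) * Real.pi = t - k * Real.pi := by linarith
    have p1 : Real.pi / 4 < ((n:ℝ) - k) * Real.pi := by rw [e1]; exact h1
    have p3 : ((n:ℝ) - k) * Real.pi < 3 * Real.pi / 4 := by rw [e1]; exact h3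
    have hnk : (0:ℝ) < (n:ℝ) - (k:ℝ) := by nlinarith
    have hnk' : (0:ℤ) < n - k := by exact_mod_cast (by push_cast; linarith : (0:ℝ) < ((n - k : ℤ) : ℝ))
    have hnk1 : (1:ℝ) ≤ (n:ℝ) - (k:ℝ) := by
      have : (1:ℤ) ≤ n - k := hnk'
      have : ((1:ℤ):ℝ) ≤ ((n - k : ℤ):ℝ) := by exact_mod_cast this
      push_cast at this; linarith
    nlinarith [mul_nonneg (by linarith : (0:ℝ) ≤ (n:ℝ) - k - 1) hπ.le]
  have hcos2 : Real.cos t ^ 2 ≤ Real.sin t ^ 2 := by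
    have e : Real.cos (2 * (t - k * Real.pi)) = Real.cos (2 * t) := by
      rw [show 2 * (t - (k:ℝ) * Real.pi) = 2*t + (-k : ℤ) * (2*Real.pi) by push_cast; ring]
      exact Real.cos_add_int_mul_two_pi (2*t) (-k)
    have hle : Real.cos (2 * (t - k*Real.pi)) ≤ 0 :=
      Real.cos_nonpos_of_pi_div_two_le_of_le (by linarith) (by linarith)
    have h2t := Real.cos_two_mul' t
    rw [e, h2t] at hle
    linarith
  have hS2 : (0:ℝ) < Real.sin t ^ 2 := by positivity
  have hr : 0 ≤ (1 - Real.cot t ^ 2) / 2 := by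
    have hd : Real.cos t ^ 2 / Real.sin t ^ 2 ≤ 1 := (div_le_one hS2).2 hcos2
    rw [Real.cot_eq_cos_div_sin, div_pow]
    linarith
  set S : ℝ := Real.sin t with hSdef
  set C : ℝ := Real.cos t with hCdef
  set u : ℝ := Real.sqrt ((1 - Real.cot t ^ 2) / 2) with hudef
  have husq : u ^ 2 = (1 - Real.cot t ^ 2) / 2 := Real.sq_sqrt hr
  have hureal : u ^ 2 * (2 * S ^ 2) = S ^ 2 - C ^ 2 := by
    rw [husq, Real.cot_eq_cos_div_sin, ← hSdef, ← hCdef]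
    field_simp
  have hu2 : (u:ℂ) ^ 2 * (2 * (S:ℂ) ^ 2) = (S:ℂ) ^ 2 - (C:ℂ) ^ 2 := by exact_mod_cast hureal
  have hSC : (S:ℂ) ^ 2 + (C:ℂ) ^ 2 = 1 := by
    exact_mod_cast congrArg (Complex.ofReal) (Real.sin_sq_add_cos_sq t)
  have hSne : (S:ℂ) ≠ 0 := Complex.ofReal_ne_zero.2 hS
  have hq2 : ((Real.sqrt 2 / 2 : ℝ):ℂ) ^ 2 = 1/2 := by
    have : (Real.sqrt 2 / 2) ^ 2 = (1:ℝ)/2 := by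
      rw [div_pow, Real.sq_sqrt (by norm_num : (0:ℝ) ≤ 2)]; norm_num
    rw [← Complex.ofReal_pow, this]; norm_num
  set q : ℝ := Real.sqrt 2 / 2 with hqdef
  -- the exponential factor
  have hE : Complex.exp (-(Complex.I * ((Real.pi:ℂ) / 4))) = (q:ℂ) * (1 - Complex.I) := by
    rw [show -(Complex.I * ((Real.pi:ℂ)/4)) = ((-(Real.pi/4) : ℝ) : ℂ) * Complex.I by
      push_cast; ring]
    rw [Complex.exp_mul_I, ← Complex.ofReal_cos, ← Complex.ofReal_sin,
      Real.cos_neg, Real.sin_neg, Real.cos_pi_div_four, Real.sin_pi_div_four]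
    push_cast [hqdef]; ring
  have hz : Complex.exp (Complex.I * ((Real.pi:ℂ) * (α:ℂ) / 2)) = ((C:ℂ) + (S:ℂ) * Complex.I) ^ 2 := by
    rw [show Complex.I * ((Real.pi:ℂ) * (α:ℂ) / 2) = ((2*t : ℝ):ℂ) * Complex.I by
      rw [ht]; push_cast; ring]
    rw [Complex.exp_mul_I, ← Complex.ofReal_cos, ← Complex.ofReal_sin,
      Real.cos_two_mul', Real.sin_two_mul, ← hSdef, ← hCdef]
    push_cast
    linear_combination (-(S:ℂ)^2) * Complex.I_sq
  have hw : Complex.exp (-(Complex.I * ((Real.pi:ℂ) * (α:ℂ) / 2))) = ((C:ℂ) - (S:ℂ) * Complex.I) ^ 2 := by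
    rw [show -(Complex.I * ((Real.pi:ℂ) * (α:ℂ) / 2)) = ((-(2*t) : ℝ):ℂ) * Complex.I by
      rw [ht]; push_cast; ring]
    rw [Complex.exp_mul_I, ← Complex.ofReal_cos, ← Complex.ofReal_sin,
      Real.cos_neg, Real.sin_neg,
      Real.cos_two_mul', Real.sin_two_mul, ← hSdef, ← hCdef]
    push_cast
    linear_combination (-(S:ℂ)^2) * Complex.I_sq
  have hcpow : (((1 - Real.cot t ^ 2) / 2 : ℝ) : ℂ) ^ ((1:ℂ)/2) = (u:ℂ) := by
    rw [show ((1:ℂ)/2) = ((1/2 : ℝ) : ℂ) by norm_num, ← Complex.ofReal_cpow hr,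
      hudef, Real.sqrt_eq_rpow]
  have hden1 : (1:ℂ) - ((C:ℂ) + (S:ℂ) * Complex.I) ^ 2 = 2*(S:ℂ)*((S:ℂ) - (C:ℂ)*Complex.I) := by
    linear_combination (-1 : ℂ) * hSC + (-(S:ℂ)^2) * Complex.I_sq
  have hden2 : (1:ℂ) - ((C:ℂ) - (S:ℂ) * Complex.I) ^ 2 = 2*(S:ℂ)*((S:ℂ) + (C:ℂ)*Complex.I) := by
    linear_combination (-1 : ℂ) * hSC + (-(S:ℂ)^2) * Complex.I_sq
  have hmul : ((S:ℂ) - (C:ℂ)*Complex.I) * ((S:ℂ) + (C:ℂ)*Complex.I) = 1 := by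
    linear_combination hSC - (C:ℂ)^2 * Complex.I_sq
  have hne1 : ((S:ℂ) - (C:ℂ)*Complex.I) ≠ 0 := left_ne_zero_of_mul_eq_one hmul
  have hne2 : ((S:ℂ) + (C:ℂ)*Complex.I) ≠ 0 := right_ne_zero_of_mul_eq_one hmul
  -- closed form for b2
  have hb2 : b2 α = !![(q:ℂ) * ((S:ℂ) + (C:ℂ)*Complex.I)/(S:ℂ), -Complex.I * (u:ℂ);
      -Complex.I * (u:ℂ), (q:ℂ) * ((S:ℂ) - (C:ℂ)*Complex.I)/(S:ℂ)] := by
    unfold b2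
    rw [hE, hz, hw, hcpow, hden1, hden2]
    ext i j
    fin_cases i <;> fin_cases j <;>
      simp only [Matrix.smul_apply, Matrix.cons_val', Matrix.cons_val_zero, Matrix.cons_val_one,
        Matrix.head_cons, Matrix.head_fin_const, Matrix.empty_val', Matrix.cons_val_fin_one,
        smul_eq_mul, Matrix.of_apply, Fin.zero_eta, Fin.mk_one]
    · field_simp
      rw [div_eq_iff (by intro h0; apply hne1; linear_combination h0)]
      linear_combination (-2*(q:ℂ)) * hSC + (2*(q:ℂ)*(C:ℂ)^2 - (q:ℂ)) * Complex.I_sq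
    · field_simp
      linear_combination (-2*Complex.I*(u:ℂ) + Complex.I^2*(u:ℂ) + (u:ℂ)) * hq2 +
        ((u:ℂ)/2) * Complex.I_sq
    · field_simp
      linear_combination (-2*Complex.I*(u:ℂ) + Complex.I^2*(u:ℂ) + (u:ℂ)) * hq2 +
        ((u:ℂ)/2) * Complex.I_sq
    · field_simp
      rw [div_eq_iff (by intro h0; apply hne2; linear_combination h0)]
      linear_combination (-2*(q:ℂ)) * hSC + (2*(q:ℂ)*(C:ℂ)^2 - (q:ℂ)) * Complex.I_sq
  have hU : (b2 α)ᴴ * b2 α = 1 := by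
    rw [hb2]
    ext i j
    fin_cases i <;> fin_cases j <;>
      simp only [Matrix.mul_apply, Fin.sum_univ_two, Matrix.conjTranspose_apply,
        Matrix.one_apply, Matrix.cons_val', Matrix.cons_val_zero, Matrix.cons_val_one,
        Matrix.head_cons, Matrix.head_fin_const, Matrix.empty_val', Matrix.cons_val_fin_one,
        Matrix.of_apply, map_div₀, _root_.map_mul, _root_.map_add, _root_.map_sub, map_neg, _root_.map_one,
        Complex.conj_ofReal, Complex.conj_I] <;>
      norm_num <;> field_simp
    · linear_combination ((S:ℂ)^2 - (C:ℂ)^2*Complex.I^2) * hq2 + (1/2 : ℂ) * hu2 +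
        (-(C:ℂ)^2/2 - (u:ℂ)^2*(S:ℂ)^2) * Complex.I_sq
    · ring1
    · ring1
    · linear_combination ((S:ℂ)^2 - (C:ℂ)^2*Complex.I^2) * hq2 + (1/2 : ℂ) * hu2 +
        (-(C:ℂ)^2/2 - (u:ℂ)^2*(S:ℂ)^2) * Complex.I_sq
  have hdet : (b2 α).det = 1 := by
    rw [hb2, Matrix.det_fin_two_of]
    field_simp
    linear_combination ((S:ℂ)^2 - (C:ℂ)^2*Complex.I^2) * hq2 + (1/2 : ℂ) * hu2 +
      (-(C:ℂ)^2/2 - (u:ℂ)^2*(S:ℂ)^2) * Complex.I_sq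
  refine ⟨hU, hdet, Matrix.mem_specialUnitaryGroup_iff.2 ⟨?_, hdet⟩⟩
  rw [Matrix.mem_unitaryGroup_iff', Matrix.star_eq_conjTranspose]
  exact hU
end

section
/- For every real number α with e^{iπα/2} ≠ 1, the trace of b₂(α) equals √2, independently of α; that is, e^{−iπ/4}·[(1+i)/(1−e^{iπα/2}) + (1+i)/(1−e^{−iπα/2})] = √2. Consequently, for α with α − 4k ∈ (1,3) for some integer k (where b₂(α) ∈ SU(2)), the eigenvalues of b₂(α) are e^{iπ/4} and e^{−iπ/4}. -/
open Complex Matrix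

lemma hE_val : Complex.exp (-(Complex.I * (Real.pi / 4)))
    = ((Real.sqrt 2 : ℝ) : ℂ) / 2 * (1 - Complex.I) := by
  have h : -(Complex.I * (Real.pi / 4)) = ((-(Real.pi / 4) : ℝ) : ℂ) * Complex.I := by
    push_cast; ring
  rw [h, Complex.exp_mul_I, ← Complex.ofReal_cos, ← Complex.ofReal_sin,
    Real.cos_neg, Real.sin_neg, Real.cos_pi_div_four, Real.sin_pi_div_four]
  push_cast; ring

lemma hF_val : Complex.exp (Complex.I * (Real.pi / 4))
    = ((Real.sqrt 2 : ℝ) : ℂ) / 2 * (1 + Complex.I) := by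
  have h : Complex.I * ((Real.pi : ℂ) / 4) = ((Real.pi / 4 : ℝ) : ℂ) * Complex.I := by
    push_cast; ring
  rw [h, Complex.exp_mul_I, ← Complex.ofReal_cos, ← Complex.ofReal_sin,
    Real.cos_pi_div_four, Real.sin_pi_div_four]
  push_cast; ring

lemma sqrt2_sq : ((Real.sqrt 2 : ℝ) : ℂ) * ((Real.sqrt 2 : ℝ) : ℂ) = 2 := by
  rw [← Complex.ofReal_mul, Real.mul_self_sqrt (by norm_num)]
  norm_num

lemma hE2_val : Complex.exp (-(Complex.I * (Real.pi / 4))) ^ 2 = -Complex.I := by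
  rw [hE_val]
  have hI : Complex.I * Complex.I = -1 := Complex.I_mul_I
  linear_combination ((1 - Complex.I) ^ 2 / 4) * sqrt2_sq + (1 / 2 : ℂ) * hI

/-- Part 1 as a standalone lemma. -/
lemma part1 (α : ℝ) (h : Complex.exp (Complex.I * (Real.pi * α / 2)) ≠ 1) :
    Complex.exp (-(Complex.I * (Real.pi / 4))) *
      ((1 + Complex.I) / (1 - Complex.exp (Complex.I * (Real.pi * α / 2))) +
       (1 + Complex.I) / (1 - Complex.exp (-(Complex.I * (Real.pi * α / 2)))))
      = (Real.sqrt 2 : ℂ) := by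
  set t := Complex.exp (Complex.I * (Real.pi * α / 2)) with ht
  have htinv : Complex.exp (-(Complex.I * (Real.pi * α / 2))) = t⁻¹ := by
    rw [ht, ← Complex.exp_neg]
  have ht0 : t ≠ 0 := Complex.exp_ne_zero _
  have h1t : (1 : ℂ) - t ≠ 0 := sub_ne_zero.2 (fun hh => h hh.symm)
  have h1t' : (1 : ℂ) - t⁻¹ ≠ 0 := by
    refine sub_ne_zero.2 fun hh => h ?_
    rw [← inv_inv t, ← hh, inv_one]
  rw [htinv]
  have key : (1 + Complex.I) / (1 - t) + (1 + Complex.I) / (1 - t⁻¹) = 1 + Complex.I := by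
    have h1t'' : 1 - t⁻¹ = -(1 - t) / t := by field_simp; ring
    have h1t2 : -(1 - t) / t ≠ 0 := by rw [← h1t'']; exact h1t'
    rw [h1t'', div_div_eq_mul_div, div_add_div _ _ h1t (neg_ne_zero.2 h1t),
      div_eq_iff (mul_ne_zero h1t (neg_ne_zero.2 h1t))]
    ring
  rw [key, hE_val]
  have hI : Complex.I * Complex.I = -1 := Complex.I_mul_I
  linear_combination -(((Real.sqrt 2 : ℝ) : ℂ) / 2) * hI

lemma det_sub_smul (M : Matrix (Fin 2) (Fin 2) ℂ) (μ : ℂ) :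
    (μ • (1 : Matrix (Fin 2) (Fin 2) ℂ) - M).det = μ ^ 2 - M.trace * μ + M.det := by
  simp [Matrix.det_fin_two, Matrix.trace_fin_two, Matrix.sub_apply, Matrix.smul_apply,
    Matrix.one_apply]
  ring

lemma spectrum_fin_two (M : Matrix (Fin 2) (Fin 2) ℂ) (μ : ℂ) :
    μ ∈ spectrum ℂ M ↔ μ ^ 2 - M.trace * μ + M.det = 0 := by
  rw [spectrum.mem_iff, Algebra.algebraMap_eq_smul_one, Matrix.isUnit_iff_isUnit_det,
    isUnit_iff_ne_zero, not_not, det_sub_smul]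

/-- The trace of `b₂(α)` equals `√2` independently of `α`, and consequently for `α`
congruent to a value in `(1,3)` mod 4 (where `b₂(α) ∈ SU(2)`) the eigenvalues of `b₂(α)`
are `e^{iπ/4}` and `e^{-iπ/4}`. -/
theorem trace_b2_eq_sqrt_two :
    (∀ α : ℝ, Complex.exp (Complex.I * (Real.pi * α / 2)) ≠ 1 →
      Complex.exp (-(Complex.I * (Real.pi / 4))) *
        ((1 + Complex.I) / (1 - Complex.exp (Complex.I * (Real.pi * α / 2))) +
         (1 + Complex.I) / (1 - Complex.exp (-(Complex.I * (Real.pi * α / 2)))))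
        = (Real.sqrt 2 : ℂ) ∧
      (b2 α).trace = (Real.sqrt 2 : ℂ)) ∧
    (∀ α : ℝ, (∃ k : ℤ, 1 < α - 4 * k ∧ α - 4 * k < 3) →
      spectrum ℂ (b2 α) =
        {Complex.exp (Complex.I * (Real.pi / 4)), Complex.exp (-(Complex.I * (Real.pi / 4)))}) := by
  have htrace : ∀ α : ℝ, (b2 α).trace =
      Complex.exp (-(Complex.I * (Real.pi / 4))) *
        ((1 + Complex.I) / (1 - Complex.exp (Complex.I * (Real.pi * α / 2))) +
         (1 + Complex.I) / (1 - Complex.exp (-(Complex.I * (Real.pi * α / 2))))) := by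
    intro α
    rw [b2, Matrix.trace_smul, Matrix.trace_fin_two_of]
    simp [smul_eq_mul]
  constructor
  · intro α h
    exact ⟨part1 α h, by rw [htrace α, part1 α h]⟩
  · intro α ⟨k, hk1, hk3⟩
    set c := Real.cos (Real.pi * α / 2) with hcdef
    set s1 := Real.sin (Real.pi * α / 2) with hs1def
    -- α is not of the form 4n
    have hα4 : ∀ n : ℤ, α ≠ 4 * n := by
      intro n hn
      rw [hn] at hk1 hk3
      have h1 : (1 : ℝ) < 4 * ((n : ℝ) - k) := by push_cast; linarith
      have h2 : (4 : ℝ) * ((n : ℝ) - k) < 3 := by push_cast; linarith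
      rcases lt_or_ge (n - k) 1 with hl | hl
      · have hh : (n : ℤ) - k ≤ 0 := by omega
        have hh' : ((n : ℝ) - k) ≤ 0 := by exact_mod_cast hh
        linarith
      · have hh' : ((n : ℝ) - k) ≥ 1 := by exact_mod_cast hl
        linarith
    -- sin (π α / 4) ≠ 0
    have hsin : Real.sin (Real.pi * α / 4) ≠ 0 := by
      intro hn
      rw [Real.sin_eq_zero_iff] at hn
      obtain ⟨n, hn⟩ := hn
      apply hα4 n
      have hπ : (Real.pi : ℝ) ≠ 0 := Real.pi_ne_zero
      field_simp at hn
      nlinarith [Real.pi_pos]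
    -- cos (π α / 2) ≠ 1
    have hcos : c ≠ 1 := by
      intro hc
      have h2 : Real.pi * α / 2 = 2 * (Real.pi * α / 4) := by ring
      rw [hcdef, h2, Real.cos_two_mul'] at hc
      have hs0 : Real.sin (Real.pi * α / 4) ^ 2 = 0 := by
        linarith [Real.sin_sq_add_cos_sq (Real.pi * α / 4)]
      exact hsin (pow_eq_zero_iff two_ne_zero |>.1 hs0)
    have pyth : s1 ^ 2 + c ^ 2 = 1 := Real.sin_sq_add_cos_sq _
    have pythC : ((s1 : ℂ)) ^ 2 + ((c : ℂ)) ^ 2 = 1 := by exact_mod_cast pyth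
    have h1c : (1 : ℝ) - c ≠ 0 := sub_ne_zero.2 fun hh => hcos hh.symm
    have h1cC : (1 : ℂ) - (c : ℂ) ≠ 0 := by
      intro hh
      apply hcos
      have : (c : ℂ) = 1 := by linear_combination -hh
      exact_mod_cast this
    have hI : Complex.I * Complex.I = -1 := Complex.I_mul_I
    -- exponentials
    have harg : Complex.I * ((Real.pi : ℂ) * (α : ℂ) / 2)
        = ((Real.pi * α / 2 : ℝ) : ℂ) * Complex.I := by push_cast; ring
    have ht : Complex.exp (Complex.I * (Real.pi * α / 2)) = (c : ℂ) + (s1 : ℂ) * Complex.I := by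
      rw [harg, Complex.exp_mul_I, ← Complex.ofReal_cos, ← Complex.ofReal_sin]
    have ht' : Complex.exp (-(Complex.I * (Real.pi * α / 2)))
        = (c : ℂ) - (s1 : ℂ) * Complex.I := by
      have harg' : -(Complex.I * ((Real.pi : ℂ) * (α : ℂ) / 2))
          = ((-(Real.pi * α / 2) : ℝ) : ℂ) * Complex.I := by push_cast; ring
      rw [harg', Complex.exp_mul_I, ← Complex.ofReal_cos, ← Complex.ofReal_sin,
        Real.cos_neg, Real.sin_neg, Complex.ofReal_neg]
      ring
    have hexp : Complex.exp (Complex.I * (Real.pi * α / 2)) ≠ 1 := by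
      rw [ht]
      intro hh
      have := congrArg Complex.re hh
      simp at this
      exact hcos this
    -- z identity
    set z : ℝ := (1 - Real.cot (Real.pi * α / 4) ^ 2) / 2 with hzdef
    have hz : z = -c / (1 - c) := by
      have hc2 : c = 1 - 2 * Real.sin (Real.pi * α / 4) ^ 2 := by
        have h2 : Real.pi * α / 2 = 2 * (Real.pi * α / 4) := by ring
        rw [hcdef, h2, Real.cos_two_mul']
        linarith [Real.sin_sq_add_cos_sq (Real.pi * α / 4)]
      rw [hzdef, Real.cot_eq_cos_div_sin, hc2]
      have hs2 := Real.sin_sq_add_cos_sq (Real.pi * α / 4)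
      field_simp
      nlinarith [hs2]
    have hzC : ((z : ℝ) : ℂ) = -(c : ℂ) / (1 - (c : ℂ)) := by
      rw [hz]; push_cast; ring
    -- sqrt square
    have hs2C : (((z : ℝ) : ℂ)) ^ ((1 : ℂ) / 2) * (((z : ℝ) : ℂ)) ^ ((1 : ℂ) / 2)
        = ((z : ℝ) : ℂ) := by
      rcases eq_or_ne ((z : ℝ) : ℂ) 0 with h0 | h0
      · rw [h0, Complex.zero_cpow (by norm_num)]; simp
      · rw [← Complex.cpow_add _ _ h0]; norm_num
    -- determinant
    have hdet : (b2 α).det = 1 := by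
      rw [b2, Matrix.det_smul, Matrix.det_fin_two_of]
      simp only [Fintype.card_fin]
      rw [ht, ht']
      set E := Complex.exp (-(Complex.I * ((Real.pi : ℂ) / 4))) with hEdef
      set w := (((z : ℝ) : ℂ)) ^ ((1 : ℂ) / 2) with hwdef
      have hprod : (1 - ((c : ℂ) + (s1 : ℂ) * Complex.I)) * (1 - ((c : ℂ) - (s1 : ℂ) * Complex.I))
          = 2 - 2 * (c : ℂ) := by
        linear_combination pythC - ((s1 : ℂ)) ^ 2 * hI
      have h1t : (1 : ℂ) - ((c : ℂ) + (s1 : ℂ) * Complex.I) ≠ 0 := by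
        intro hh
        have := congrArg Complex.re hh
        simp at this
        exact h1c (by linarith)
      have h1t' : (1 : ℂ) - ((c : ℂ) - (s1 : ℂ) * Complex.I) ≠ 0 := by
        intro hh
        have := congrArg Complex.re hh
        simp at this
        exact h1c (by linarith)
      have hww : E * w * (E * w) = -Complex.I * ((z : ℝ) : ℂ) := by
        have : E * w * (E * w) = E ^ 2 * (w * w) := by ring
        rw [this, hE2_val, hwdef, hs2C]
      have key : (1 + Complex.I) / (1 - ((c : ℂ) + (s1 : ℂ) * Complex.I)) *
            ((1 + Complex.I) / (1 - ((c : ℂ) - (s1 : ℂ) * Complex.I)))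
          = 2 * Complex.I / (2 - 2 * (c : ℂ)) := by
        rw [div_mul_div_comm, hprod]
        congr 1
        linear_combination hI
      rw [key, hww, hE2_val, hzC]
      have h2c : (2 : ℂ) - 2 * (c : ℂ) ≠ 0 := by
        intro hh; apply h1cC; linear_combination hh / 2
      field_simp
      linear_combination -hI
    -- trace
    have htr : (b2 α).trace = ((Real.sqrt 2 : ℝ) : ℂ) := by
      rw [htrace α, part1 α hexp]
    -- spectrum
    have hsum : Complex.exp (Complex.I * (Real.pi / 4)) +
        Complex.exp (-(Complex.I * (Real.pi / 4))) = ((Real.sqrt 2 : ℝ) : ℂ) := by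
      rw [hF_val, hE_val]; ring
    have hprodFE : Complex.exp (Complex.I * (Real.pi / 4)) *
        Complex.exp (-(Complex.I * (Real.pi / 4))) = 1 := by
      rw [← Complex.exp_add]
      simp
    ext μ
    rw [spectrum_fin_two, htr, hdet]
    have hfact : μ ^ 2 - ((Real.sqrt 2 : ℝ) : ℂ) * μ + 1
        = (μ - Complex.exp (Complex.I * (Real.pi / 4))) *
          (μ - Complex.exp (-(Complex.I * (Real.pi / 4)))) := by
      rw [← hsum, ← hprodFE]; ring
    rw [hfact, mul_eq_zero, sub_eq_zero, sub_eq_zero]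
    simp [Set.mem_insert_iff]
end
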